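/- Assume all agents have additive cost functions, n ≥ 3 and 1 < α < 3/2. Every α-PMMS allocation is (nα/(α + (n−1)(1−α/2)))-MMS. Moreover, for every even n ≥ 4 and every ε > 0, there exists an n-agent instance with additive cost functions and an α-PMMS allocation that is not (nα/(α + (n−1)(2−α)) − ε)-MMS. -/

import Mathlib

open Finset

/-- `T` is a `k`-partition of the bundle `S`: pairwise disjoint bundles whose union is `S`. -/
def IsPartitionOf {E : Type*} [DecidableEq E] {k : ℕ} (T : Fin k → Finset E) (S : Finset E) :
    Prop :=
  (∀ i j : Fin k, i ≠ j → Disjoint (T i) (T j)) ∧ Finset.univ.biUnion T = S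

/-- The maximin share of cost function `c` on `S` among `k` agents:
the minimum over `k`-partitions of `S` of the maximum cost of a bundle. -/
noncomputable def MMS {E : Type*} [DecidableEq E] (c : Finset E → ℝ) (k : ℕ) (S : Finset E) :
    ℝ :=
  sInf { m : ℝ | ∃ T : Fin k → Finset E, IsPartitionOf T S ∧ m = ⨆ j : Fin k, c (T j) }

/-- `c` is a nonnegative additive cost function. -/
def AdditiveCost {E : Type*} [DecidableEq E] (c : Finset E → ℝ) : Prop :=
  (∀ S : Finset E, 0 ≤ c S) ∧ ∀ S : Finset E, c S = ∑ e ∈ S, c {e}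

/-- `c` is a nonnegative monotone cost function with `c ∅ = 0`. -/
def MonotoneCost {E : Type*} (c : Finset E → ℝ) : Prop :=
  (∀ S : Finset E, 0 ≤ c S) ∧ c ∅ = 0 ∧ ∀ ⦃S T : Finset E⦄, S ⊆ T → c S ≤ c T

/-- `c` is subadditive. -/
def SubadditiveCost {E : Type*} [DecidableEq E] (c : Finset E → ℝ) : Prop :=
  ∀ S T : Finset E, c (S ∪ T) ≤ c S + c T

/-- `c` is submodular. -/
def SubmodularCost {E : Type*} [DecidableEq E] (c : Finset E → ℝ) : Prop :=
  ∀ S T : Finset E, c (S ∪ T) + c (S ∩ T) ≤ c S + c T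

/-- `A` is an allocation of all chores among the `n` agents. -/
def IsAllocation {E : Type*} [DecidableEq E] [Fintype E] {n : ℕ} (A : Fin n → Finset E) : Prop :=
  IsPartitionOf A Finset.univ

/-- `A` is `α`-envy-free. -/
def IsEF {E : Type*} {n : ℕ} (α : ℝ) (c : Fin n → Finset E → ℝ) (A : Fin n → Finset E) : Prop :=
  ∀ i j, c i (A i) ≤ α * c i (A j)

/-- `A` is `α`-envy-free up to one item. -/
def IsEF1 {E : Type*} [DecidableEq E] {n : ℕ} (α : ℝ) (c : Fin n → Finset E → ℝ)
    (A : Fin n → Finset E) : Prop :=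
  ∀ i j, i ≠ j → A i = ∅ ∨ ∃ e ∈ A i, c i (A i \ {e}) ≤ α * c i (A j)

/-- `A` is `α`-envy-free up to any (positive-cost) item. -/
def IsEFX {E : Type*} [DecidableEq E] {n : ℕ} (α : ℝ) (c : Fin n → Finset E → ℝ)
    (A : Fin n → Finset E) : Prop :=
  ∀ i j, i ≠ j → ∀ e ∈ A i, 0 < c i {e} → c i (A i \ {e}) ≤ α * c i (A j)

/-- `A` is an `α`-MMS allocation. -/
def IsMMSFair {E : Type*} [DecidableEq E] [Fintype E] {n : ℕ} (α : ℝ)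
    (c : Fin n → Finset E → ℝ) (A : Fin n → Finset E) : Prop :=
  ∀ i, c i (A i) ≤ α * MMS (c i) n Finset.univ

/-- `A` is an `α`-PMMS allocation. -/
def IsPMMS {E : Type*} [DecidableEq E] {n : ℕ} (α : ℝ)
    (c : Fin n → Finset E → ℝ) (A : Fin n → Finset E) : Prop :=
  ∀ i j, i ≠ j → c i (A i) ≤ α * MMS (c i) 2 (A i ∪ A j)

/-- The optimal (minimum) social cost over all allocations. -/
noncomputable def OPT {E : Type*} [DecidableEq E] [Fintype E] {n : ℕ}
    (c : Fin n → Finset E → ℝ) : ℝ :=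
  sInf { s : ℝ | ∃ A : Fin n → Finset E, IsAllocation A ∧ s = ∑ i, c i (A i) }

section Helpers
variable {E : Type*} [DecidableEq E]

lemma addc_empty {c : Finset E → ℝ} (hc : AdditiveCost c) : c ∅ = 0 := by
  rw [hc.2]; simp

lemma addc_insert {c : Finset E → ℝ} (hc : AdditiveCost c) {e : E} {S : Finset E}
    (he : e ∉ S) : c (insert e S) = c S + c {e} := by
  rw [hc.2 (insert e S), Finset.sum_insert he, ← hc.2 S]; ring

lemma addc_union {c : Finset E → ℝ} (hc : AdditiveCost c) {S T : Finset E}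
    (hST : Disjoint S T) : c (S ∪ T) = c S + c T := by
  rw [hc.2 (S ∪ T), Finset.sum_union hST, ← hc.2 S, ← hc.2 T]

lemma addc_mono {c : Finset E → ℝ} (hc : AdditiveCost c) {S T : Finset E} (h : S ⊆ T) :
    c S ≤ c T := by
  rw [hc.2 S, hc.2 T]
  exact Finset.sum_le_sum_of_subset_of_nonneg h (fun e _ _ => hc.1 {e})

lemma addc_single_le {c : Finset E → ℝ} (hc : AdditiveCost c) {e : E} {S : Finset E}
    (he : e ∈ S) : c {e} ≤ c S :=
  addc_mono hc (Finset.singleton_subset_iff.2 he)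

lemma exists_partition (k : ℕ) (hk : 0 < k) (S : Finset E) :
    ∃ T : Fin k → Finset E, IsPartitionOf T S := by
  refine ⟨fun j => if j = ⟨0, hk⟩ then S else ∅, ?_, ?_⟩
  · intro i j hij
    by_cases hi : i = ⟨0, hk⟩ <;> by_cases hj : j = ⟨0, hk⟩ <;> simp_all
  · ext e
    simp only [Finset.mem_biUnion, Finset.mem_univ, true_and]
    constructor
    · rintro ⟨j, hj⟩
      split at hj
      · exact hj
      · exact absurd hj (Finset.notMem_empty e)
    · intro he; exact ⟨⟨0, hk⟩, by simp [he]⟩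

lemma MMS_le {c : Finset E → ℝ} (hc0 : ∀ S, 0 ≤ c S) {k : ℕ} (hk : 0 < k)
    {T : Fin k → Finset E} {S : Finset E} (hT : IsPartitionOf T S) :
    MMS c k S ≤ ⨆ j, c (T j) := by
  apply csInf_le
  · refine ⟨0, ?_⟩
    rintro m ⟨T', hT', rfl⟩
    exact le_trans (hc0 (T' ⟨0, hk⟩)) (le_ciSup (f := fun j => c (T' j)) (Set.finite_range _).bddAbove ⟨0, hk⟩)
  · exact ⟨T, hT, rfl⟩

lemma le_MMS {c : Finset E → ℝ} {k : ℕ} (hk : 0 < k) {S : Finset E} {L : ℝ}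
    (h : ∀ T : Fin k → Finset E, IsPartitionOf T S → L ≤ ⨆ j, c (T j)) :
    L ≤ MMS c k S := by
  obtain ⟨T, hT⟩ := exists_partition k hk S
  refine le_csInf ⟨_, T, hT, rfl⟩ ?_
  rintro m ⟨T', hT', rfl⟩
  exact h T' hT'

lemma partition_sum {c : Finset E → ℝ} (hc : AdditiveCost c) {k : ℕ}
    {T : Fin k → Finset E} {S : Finset E} (hT : IsPartitionOf T S) :
    ∑ j, c (T j) = c S := by
  have hdisj : (↑(Finset.univ : Finset (Fin k)) : Set (Fin k)).PairwiseDisjoint T :=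
    fun i _ j _ hij => hT.1 i j hij
  calc ∑ j, c (T j) = ∑ j, ∑ e ∈ T j, c {e} := by
        refine Finset.sum_congr rfl (fun j _ => hc.2 (T j))
    _ = ∑ e ∈ Finset.univ.biUnion T, c {e} := (Finset.sum_biUnion hdisj).symm
    _ = c S := by rw [hT.2, ← hc.2]

lemma MMS_nonneg {c : Finset E → ℝ} (hc0 : ∀ S, 0 ≤ c S) {k : ℕ} (hk : 0 < k)
    (S : Finset E) : 0 ≤ MMS c k S :=
  le_MMS hk (fun T _ => le_trans (hc0 (T ⟨0, hk⟩)) (le_ciSup (f := fun j => c (T j)) (Set.finite_range _).bddAbove ⟨0, hk⟩))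

lemma window_key {c : Finset E → ℝ} (hc : AdditiveCost c) {A B : Finset E}
    (hAB : Disjoint A B) {q : ℝ} (hq : 0 < q) (hx1 : q ≤ c A) (hx2 : c A < 3 / 2 * q)
    (hitems : ∀ e : E, c {e} < q) (hy : c B < q - c A / 2)
    (havoid : ∀ T ⊆ A ∪ B, c T ≤ c A + c B - q ∨ q ≤ c T) : False := by
  have hy0 : 0 ≤ c B := hc.1 B
  set x := c A with hxdef
  set y := c B with hydef
  have step1 : ∀ T ⊆ A, c T ≤ x + y - q → c T ≤ x - q := by
    intro T hTA hTle
    have haux : ∀ B' ⊆ B, c (T ∪ B') ≤ x + y - q := by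
      intro B' hB'
      induction B' using Finset.induction_on with
      | empty => simpa using hTle
      | @insert e B' heB' ih =>
        have hB'B : B' ⊆ B := (Finset.insert_subset_iff.1 hB').2
        have heB : e ∈ B := (Finset.insert_subset_iff.1 hB').1
        have heT : e ∉ T := fun h => (Finset.disjoint_left.1 hAB (hTA h)) heB
        have henotin : e ∉ T ∪ B' := by simp [heT, heB']
        have hval : c (T ∪ insert e B') = c (T ∪ B') + c {e} := by
          rw [Finset.union_insert, addc_insert hc henotin]
        have hce : c {e} ≤ y := addc_single_le hc heB
        have hlt : c (T ∪ insert e B') < q := by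
          have h1 := ih hB'B
          rw [hval]; linarith
        have hsub : T ∪ insert e B' ⊆ A ∪ B := Finset.union_subset_union hTA hB'
        rcases havoid _ hsub with h | h
        · exact h
        · linarith
    have h2 : c (T ∪ B) ≤ x + y - q := haux B le_rfl
    have h3 : c (T ∪ B) = c T + y := addc_union hc (hAB.mono_left hTA)
    linarith
  have step2 : ∀ T ⊆ A, c T < q → c T ≤ x - q := by
    intro T hTA hTq
    rcases havoid T (hTA.trans Finset.subset_union_left) with h | h
    · exact step1 T hTA h
    · linarith
  have step3 : ∀ e ∈ A, c {e} ≤ x - q := fun e he =>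
    step2 {e} (Finset.singleton_subset_iff.2 he) (hitems e)
  have hP : (∅ : Finset E) ∈ A.powerset.filter (fun T => c T ≤ x - q) := by
    simp only [Finset.mem_filter, Finset.mem_powerset]
    refine ⟨Finset.empty_subset A, ?_⟩
    rw [addc_empty hc]; linarith
  obtain ⟨T, hTmem, hTmax⟩ := Finset.exists_max_image _ c ⟨∅, hP⟩
  rw [Finset.mem_filter, Finset.mem_powerset] at hTmem
  obtain ⟨hTA, hTle⟩ := hTmem
  have hATdiff : c (A \ T) = x - c T := by
    have h := addc_union hc (Finset.disjoint_sdiff : Disjoint T (A \ T))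
    rw [Finset.union_sdiff_of_subset hTA] at h
    linarith
  have hex : ∃ e ∈ A \ T, 0 < c {e} := by
    by_contra hcon
    push_neg at hcon
    have h : c (A \ T) ≤ 0 := by
      rw [hc.2]
      exact Finset.sum_nonpos (fun e he => hcon e he)
    linarith
  obtain ⟨e, heAT, hce⟩ := hex
  have heA : e ∈ A := (Finset.mem_sdiff.1 heAT).1
  have heT : e ∉ T := (Finset.mem_sdiff.1 heAT).2
  have hT' : c (insert e T) = c T + c {e} := addc_insert hc heT
  have h1 : c (insert e T) < q := by
    have h3 := step3 e heA
    rw [hT']; linarith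
  have h2 : c (insert e T) ≤ x - q := step2 _ (Finset.insert_subset heA hTA) h1
  have h3 : insert e T ∈ A.powerset.filter (fun T => c T ≤ x - q) := by
    simp only [Finset.mem_filter, Finset.mem_powerset]
    exact ⟨Finset.insert_subset heA hTA, h2⟩
  have h4 := hTmax _ h3
  rw [hT'] at h4
  linarith

end Helpers

theorem part1_aux : ∀ (E : Type) [DecidableEq E] [Fintype E] (n : ℕ), 3 ≤ n →
      ∀ α : ℝ, 1 < α → α < 3 / 2 →
      ∀ c : Fin n → Finset E → ℝ, (∀ i, AdditiveCost (c i)) →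
      ∀ A : Fin n → Finset E, IsAllocation A → IsPMMS α c A →
        IsMMSFair ((n : ℝ) * α / (α + ((n : ℝ) - 1) * (1 - α / 2))) c A := by
  intro E _ _ n hn α hα1 hα2 c hadd A hA hPMMS i
  have hn0 : 0 < n := by omega
  haveI : Nonempty (Fin n) := ⟨⟨0, hn0⟩⟩
  have hN3 : (3 : ℝ) ≤ (n : ℝ) := by exact_mod_cast hn
  have hα0 : (0:ℝ) < α := by linarith
  set x := c i (A i) with hxdef
  set μ := MMS (c i) n (Finset.univ : Finset E) with hμdef
  have hD : 0 < α + ((n:ℝ) - 1) * (1 - α / 2) := by nlinarith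
  have hμ0 : 0 ≤ μ := MMS_nonneg (hadd i).1 hn0 _
  have hβα : α ≤ (n:ℝ) * α / (α + ((n:ℝ) - 1) * (1 - α / 2)) := by
    rw [le_div_iff₀ hD]; nlinarith
  by_cases hx0 : x ≤ 0
  · have h1 : 0 ≤ (n:ℝ) * α / (α + ((n:ℝ) - 1) * (1 - α / 2)) * μ :=
      mul_nonneg (div_nonneg (by positivity) hD.le) hμ0
    linarith
  push_neg at hx0
  set q := x / α with hqdef
  have hq0 : 0 < q := div_pos hx0 hα0
  have hαq : α * q = x := by rw [hqdef]; field_simp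
  by_cases hbig : ∃ e : E, q ≤ c i {e}
  · obtain ⟨e, he⟩ := hbig
    have hμe : c i {e} ≤ μ := by
      apply le_MMS hn0
      intro T hT
      have hmem : e ∈ Finset.univ.biUnion T := by rw [hT.2]; exact Finset.mem_univ e
      obtain ⟨j, -, hj⟩ := Finset.mem_biUnion.1 hmem
      exact le_trans (addc_single_le (hadd i) hj)
        (le_ciSup (f := fun l => c i (T l)) (Set.finite_range _).bddAbove j)
    have h1 : x ≤ α * μ := by nlinarith
    have h2 : α * μ ≤ (n:ℝ) * α / (α + ((n:ℝ) - 1) * (1 - α / 2)) * μ :=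
      mul_le_mul_of_nonneg_right hβα hμ0
    linarith
  · push_neg at hbig
    have hpair : ∀ j, j ≠ i → q - x / 2 ≤ c i (A j) := by
      intro j hji
      by_contra hcon
      push_neg at hcon
      have hdisj : Disjoint (A i) (A j) := hA.1 i j (Ne.symm hji)
      refine window_key (hadd i) hdisj hq0 ?_ ?_ hbig hcon ?_
      · rw [hqdef, div_le_iff₀ hα0]; nlinarith
      · have h1 : q * α = x := by rw [mul_comm]; exact hαq
        nlinarith
      · intro T hTsub
        by_contra hTcon
        push_neg at hTcon
        obtain ⟨h1, h2⟩ := hTcon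
        set S := A i ∪ A j with hSdef
        have hcS : c i S = x + c i (A j) := addc_union (hadd i) hdisj
        have hpart : IsPartitionOf (fun l : Fin 2 => if l = 0 then T else S \ T) S := by
          constructor
          · intro a b hab
            fin_cases a <;> fin_cases b <;>
              simp_all [Finset.disjoint_sdiff, Finset.sdiff_disjoint]
          · ext e
            simp only [Finset.mem_biUnion, Finset.mem_univ, true_and]
            constructor
            · rintro ⟨l, hl⟩
              split at hl
              · exact hTsub hl
              · exact (Finset.mem_sdiff.1 hl).1
            · intro he
              by_cases heT : e ∈ T
              · exact ⟨0, by simp [heT]⟩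
              · exact ⟨1, by simp [heT, he]⟩
        have hsdiff : c i (S \ T) = c i S - c i T := by
          have h := addc_union (hadd i) (Finset.disjoint_sdiff : Disjoint T (S \ T))
          rw [Finset.union_sdiff_of_subset hTsub] at h
          linarith
        have hsd : c i (S \ T) < q := by
          rw [hsdiff, hcS]; linarith
        have hsup : (⨆ l : Fin 2, c i (if l = 0 then T else S \ T)) < q := by
          refine lt_of_le_of_lt (ciSup_le (fun l => ?_)) (max_lt h2 hsd)
          fin_cases l
          · exact le_max_left _ _
          · exact le_max_right _ _
        have hMMSle : MMS (c i) 2 S ≤ ⨆ l : Fin 2, c i (if l = 0 then T else S \ T) :=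
          MMS_le (hadd i).1 (by norm_num) hpart
        have hPij := hPMMS i j (Ne.symm hji)
        have hlt : α * MMS (c i) 2 S < α * q :=
          mul_lt_mul_of_pos_left (lt_of_le_of_lt hMMSle hsup) hα0
        rw [← hSdef] at hPij
        linarith
    -- global step
    have hsum : c i Finset.univ = ∑ j, c i (A j) := (partition_sum (hadd i) hA).symm
    have hsplit : ∑ j, c i (A j) = c i (A i) + ∑ j ∈ Finset.univ.erase i, c i (A j) :=
      (Finset.add_sum_erase _ _ (Finset.mem_univ i)).symm
    have hcard : (Finset.univ.erase i).card = n - 1 := by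
      rw [Finset.card_erase_of_mem (Finset.mem_univ i), Finset.card_univ, Fintype.card_fin]
    have hlow : ((n:ℝ) - 1) * (q - x / 2) ≤ ∑ j ∈ Finset.univ.erase i, c i (A j) := by
      have h := Finset.card_nsmul_le_sum (Finset.univ.erase i) (fun j => c i (A j)) (q - x / 2)
        (fun j hj => hpair j (Finset.ne_of_mem_erase hj))
      rw [hcard, nsmul_eq_mul] at h
      have hc : ((n - 1 : ℕ) : ℝ) = (n : ℝ) - 1 := by
        rw [Nat.cast_sub (by omega)]; norm_num
      rw [hc] at h
      exact h
    have hμn : c i Finset.univ ≤ (n:ℝ) * μ := by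
      have h := le_MMS (c := c i) hn0 (S := (Finset.univ : Finset E))
        (L := c i Finset.univ / (n:ℝ)) ?_
      · rw [← hμdef] at h
        rw [div_le_iff₀ (by positivity : (0:ℝ) < (n:ℝ))] at h
        linarith
      · intro T hT
        have hs : ∑ j, c i (T j) = c i Finset.univ := partition_sum (hadd i) hT
        have hub : ∀ j, c i (T j) ≤ ⨆ l, c i (T l) := fun j =>
          le_ciSup (f := fun l => c i (T l)) (Set.finite_range _).bddAbove j
        have hle : c i Finset.univ ≤ (n:ℝ) * ⨆ l, c i (T l) := by
          calc c i Finset.univ = ∑ j, c i (T j) := hs.symm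
            _ ≤ ∑ _j : Fin n, ⨆ l, c i (T l) := Finset.sum_le_sum (fun j _ => hub j)
            _ = (n:ℝ) * ⨆ l, c i (T l) := by
                rw [Finset.sum_const, Finset.card_univ, Fintype.card_fin, nsmul_eq_mul]
        rw [div_le_iff₀ (by positivity : (0:ℝ) < (n:ℝ))]
        linarith
    have hkey : x + ((n:ℝ) - 1) * (q - x / 2) ≤ (n:ℝ) * μ := by
      have h1 : x + ((n:ℝ) - 1) * (q - x / 2) ≤ c i Finset.univ := by
        rw [hsum, hsplit]
        have : c i (A i) = x := rfl
        linarith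
      linarith
    rw [div_mul_eq_mul_div, le_div_iff₀ hD]
    have hexp : α * (x + ((n:ℝ) - 1) * (q - x / 2)) = x * (α + ((n:ℝ) - 1) * (1 - α / 2)) := by
      linear_combination ((n:ℝ) - 1) * hαq
    linarith [mul_le_mul_of_nonneg_left hkey hα0.le, hexp]

section Part2
variable (n : ℕ) [NeZero n] (α : ℝ)

noncomputable def pw : Fin (n * n) → ℝ := fun e =>
  if (finProdFinEquiv.symm e).2 = 0 then α / n else (2 - α) / n

noncomputable def pc : Fin n → Finset (Fin (n * n)) → ℝ := fun i S =>
  if i = 0 then ∑ e ∈ S, pw n α e else 0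

def pA : Fin n → Finset (Fin (n * n)) := fun i =>
  Finset.univ.image (fun s : Fin n => finProdFinEquiv (s, i))

def pT : Fin n → Finset (Fin (n * n)) := fun s =>
  Finset.univ.image (fun i : Fin n => finProdFinEquiv (s, i))

end Part2

theorem part2_aux : ∀ n : ℕ, Even n → 4 ≤ n → ∀ α : ℝ, 1 < α → α < 3 / 2 → ∀ ε : ℝ, 0 < ε →
      ∃ (m : ℕ) (c : Fin n → Finset (Fin m) → ℝ) (A : Fin n → Finset (Fin m)),
        (∀ i, AdditiveCost (c i)) ∧ IsAllocation A ∧ IsPMMS α c A ∧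
        ¬ IsMMSFair ((n : ℝ) * α / (α + ((n : ℝ) - 1) * (2 - α)) - ε) c A := by
  intro n hev hn4 α hα1 hα2 ε hε
  have hn0 : 0 < n := by omega
  haveI : NeZero n := ⟨by omega⟩
  haveI : Nonempty (Fin n) := ⟨⟨0, hn0⟩⟩
  have hNne : ((n:ℝ)) ≠ 0 := by positivity
  have hN4 : (4:ℝ) ≤ (n:ℝ) := by exact_mod_cast hn4
  have hw0 : ∀ e, 0 ≤ pw n α e := by
    intro e
    unfold pw
    split
    · positivity
    · have h2 : (0:ℝ) ≤ 2 - α := by linarith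
      positivity
  have hcadd : ∀ i, AdditiveCost (pc n α i) := by
    intro i
    by_cases hi : i = 0
    · subst hi
      constructor
      · intro S
        simp only [pc, if_pos rfl]
        exact Finset.sum_nonneg (fun e _ => hw0 e)
      · intro S
        simp [pc, Finset.sum_singleton]
    · constructor
      · intro S; simp [pc, hi]
      · intro S; simp [pc, hi]
  have hinj : ∀ i : Fin n, ∀ a ∈ (Finset.univ : Finset (Fin n)),
      ∀ b ∈ (Finset.univ : Finset (Fin n)),
      finProdFinEquiv (a, i) = finProdFinEquiv (b, i) → a = b := by
    intro i a _ b _ h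
    have := finProdFinEquiv.injective h
    exact (Prod.mk.injEq _ _ _ _ ▸ this).1
  have hAsum : ∀ i : Fin n, ∑ e ∈ pA n i, pw n α e = if i = 0 then α else 2 - α := by
    intro i
    unfold pA
    rw [Finset.sum_image (hinj i)]
    have hval : ∀ s : Fin n, pw n α (finProdFinEquiv (s, i))
        = if i = 0 then α / n else (2 - α) / n := by
      intro s
      unfold pw
      rw [Equiv.symm_apply_apply]
    rw [Finset.sum_congr rfl (fun s _ => hval s), Finset.sum_const, Finset.card_univ,
      Fintype.card_fin, nsmul_eq_mul]
    split
    · field_simp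
    · field_simp
  have hdisjA : ∀ i j : Fin n, i ≠ j → Disjoint (pA n i) (pA n j) := by
    intro i j hij
    rw [Finset.disjoint_left]
    intro a ha hb
    simp only [pA, Finset.mem_image, Finset.mem_univ, true_and] at ha hb
    obtain ⟨s, hs⟩ := ha
    obtain ⟨t, ht⟩ := hb
    apply hij
    have h := finProdFinEquiv.injective (hs.trans ht.symm)
    exact (Prod.mk.injEq _ _ _ _ ▸ h).2
  have hAalloc : IsAllocation (pA n) := by
    constructor
    · exact hdisjA
    · rw [Finset.eq_univ_iff_forall]
      intro e
      refine Finset.mem_biUnion.2 ⟨(finProdFinEquiv.symm e).2, Finset.mem_univ _, ?_⟩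
      simp only [pA, Finset.mem_image, Finset.mem_univ, true_and]
      exact ⟨(finProdFinEquiv.symm e).1, by
        rw [Prod.mk.eta]; exact finProdFinEquiv.apply_symm_apply e⟩
  have hc0A : ∀ i : Fin n, pc n α 0 (pA n i) = if i = 0 then α else 2 - α := by
    intro i
    simp only [pc, if_pos rfl]
    exact hAsum i
  have hPMMS : IsPMMS α (pc n α) (pA n) := by
    intro i j hij
    by_cases hi : i = 0
    · subst hi
      have hj0 : j ≠ 0 := Ne.symm hij
      have hA0 : pc n α 0 (pA n 0) = α := by rw [hc0A 0, if_pos rfl]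
      have hAj : pc n α 0 (pA n j) = 2 - α := by rw [hc0A j, if_neg hj0]
      have hcS : pc n α 0 (pA n 0 ∪ pA n j) = 2 := by
        rw [addc_union (hcadd 0) (hdisjA 0 j hij), hA0, hAj]
        ring
      have hMMS1 : (1:ℝ) ≤ MMS (pc n α 0) 2 (pA n 0 ∪ pA n j) := by
        apply le_MMS (by norm_num)
        intro T hT
        have hsum2 : ∑ l, pc n α 0 (T l) = pc n α 0 (pA n 0 ∪ pA n j) :=
          partition_sum (hcadd 0) hT
        rw [Fin.sum_univ_two, hcS] at hsum2
        by_contra hlt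
        push_neg at hlt
        have h0 : pc n α 0 (T 0) ≤ ⨆ l, pc n α 0 (T l) :=
          le_ciSup (f := fun l => pc n α 0 (T l)) (Set.finite_range _).bddAbove 0
        have h1 : pc n α 0 (T 1) ≤ ⨆ l, pc n α 0 (T l) :=
          le_ciSup (f := fun l => pc n α 0 (T l)) (Set.finite_range _).bddAbove 1
        linarith
      rw [hA0]
      nlinarith
    · have hzero : pc n α i (pA n i) = 0 := by simp [pc, hi]
      rw [hzero]
      have hnn : 0 ≤ MMS (pc n α i) 2 (pA n i ∪ pA n j) :=
        MMS_nonneg (fun S => by simp [pc, hi]) (by norm_num) _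
      nlinarith
  refine ⟨n * n, pc n α, pA n, hcadd, hAalloc, hPMMS, ?_⟩
  intro hfair
  have h0 := hfair 0
  have hA0 : pc n α 0 (pA n 0) = α := by rw [hc0A 0, if_pos rfl]
  rw [hA0] at h0
  set M := MMS (pc n α 0) n (Finset.univ : Finset (Fin (n * n))) with hMdef
  set D : ℝ := α + ((n:ℝ) - 1) * (2 - α) with hDdef
  have hD0 : 0 < D := by nlinarith
  have hinj2 : ∀ s : Fin n, ∀ a ∈ (Finset.univ : Finset (Fin n)),
      ∀ b ∈ (Finset.univ : Finset (Fin n)),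
      finProdFinEquiv (s, a) = finProdFinEquiv (s, b) → a = b := by
    intro s a _ b _ h
    have := finProdFinEquiv.injective h
    exact (Prod.mk.injEq _ _ _ _ ▸ this).2
  have hTpart : IsPartitionOf (pT n) Finset.univ := by
    constructor
    · intro s t hst
      rw [Finset.disjoint_left]
      intro a ha hb
      simp only [pT, Finset.mem_image, Finset.mem_univ, true_and] at ha hb
      obtain ⟨u, hu⟩ := ha
      obtain ⟨v, hv⟩ := hb
      apply hst
      have h := finProdFinEquiv.injective (hu.trans hv.symm)
      exact (Prod.mk.injEq _ _ _ _ ▸ h).1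
    · rw [Finset.eq_univ_iff_forall]
      intro e
      refine Finset.mem_biUnion.2 ⟨(finProdFinEquiv.symm e).1, Finset.mem_univ _, ?_⟩
      simp only [pT, Finset.mem_image, Finset.mem_univ, true_and]
      exact ⟨(finProdFinEquiv.symm e).2, by
        rw [Prod.mk.eta]; exact finProdFinEquiv.apply_symm_apply e⟩
  have hTsum : ∀ s : Fin n, pc n α 0 (pT n s) = D / (n:ℝ) := by
    intro s
    simp only [pc, if_pos rfl, pT]
    rw [Finset.sum_image (hinj2 s)]
    have hval : ∀ i : Fin n, pw n α (finProdFinEquiv (s, i))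
        = if i = 0 then α / n else (2 - α) / n := by
      intro i
      unfold pw
      rw [Equiv.symm_apply_apply]
    rw [Finset.sum_congr rfl (fun i _ => hval i)]
    rw [← Finset.add_sum_erase Finset.univ _ (Finset.mem_univ (0 : Fin n))]
    rw [if_pos rfl]
    have h2 : ∑ i ∈ Finset.univ.erase (0 : Fin n),
        (if i = 0 then α / n else (2 - α) / n) = ((n:ℝ) - 1) * ((2 - α) / n) := by
      rw [Finset.sum_congr rfl (fun i hi => if_neg (Finset.ne_of_mem_erase hi))]
      rw [Finset.sum_const, nsmul_eq_mul, Finset.card_erase_of_mem (Finset.mem_univ _),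
        Finset.card_univ, Fintype.card_fin]
      have hc : ((n - 1 : ℕ) : ℝ) = (n : ℝ) - 1 := by
        rw [Nat.cast_sub (by omega)]; norm_num
      rw [hc]
    rw [h2, hDdef, if_pos trivial]
    field_simp
  have hMle : M ≤ D / (n:ℝ) := by
    have h := MMS_le (c := pc n α 0) (fun S => by
      simp only [pc, if_pos rfl]
      exact Finset.sum_nonneg (fun e _ => hw0 e)) hn0 hTpart
    have hconst : (⨆ s : Fin n, pc n α 0 (pT n s)) = D / (n:ℝ) := by
      have hfun : (fun s : Fin n => pc n α 0 (pT n s)) = fun _ => D / (n:ℝ) :=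
        funext hTsum
      rw [hfun]
      exact ciSup_const
    rw [hMdef]
    rw [← hconst]
    exact h
  have hM0 : 0 ≤ M := by
    rw [hMdef]
    exact MMS_nonneg (fun S => by
      simp only [pc, if_pos rfl]
      exact Finset.sum_nonneg (fun e _ => hw0 e)) hn0 _
  have hDN : (n:ℝ) * α / D * (D / (n:ℝ)) = α := by field_simp
  rcases le_or_gt ((n:ℝ) * α / D - ε) 0 with hc | hc
  · nlinarith [mul_nonpos_of_nonpos_of_nonneg hc hM0]
  · have h1 : ((n:ℝ) * α / D - ε) * M ≤ ((n:ℝ) * α / D - ε) * (D / (n:ℝ)) :=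
      mul_le_mul_of_nonneg_left hMle hc.le
    have h3 : 0 < D / (n:ℝ) := by positivity
    nlinarith [mul_pos hε h3]

/-- Proposition 5.6: with additive cost functions, `n ≥ 3` and `1 < α < 3/2`, every
`α`-PMMS allocation is `nα/(α+(n-1)(1-α/2))`-MMS; and for even `n ≥ 4` and every `ε > 0`
there is an `α`-PMMS allocation that is not `(nα/(α+(n-1)(2-α)) - ε)`-MMS. -/
theorem alphaPMMS_MMS_bounds :
    (∀ (E : Type) [DecidableEq E] [Fintype E] (n : ℕ), 3 ≤ n →
      ∀ α : ℝ, 1 < α → α < 3 / 2 →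
      ∀ c : Fin n → Finset E → ℝ, (∀ i, AdditiveCost (c i)) →
      ∀ A : Fin n → Finset E, IsAllocation A → IsPMMS α c A →
        IsMMSFair ((n : ℝ) * α / (α + ((n : ℝ) - 1) * (1 - α / 2))) c A) ∧
    (∀ n : ℕ, Even n → 4 ≤ n → ∀ α : ℝ, 1 < α → α < 3 / 2 → ∀ ε : ℝ, 0 < ε →
      ∃ (m : ℕ) (c : Fin n → Finset (Fin m) → ℝ) (A : Fin n → Finset (Fin m)),
        (∀ i, AdditiveCost (c i)) ∧ IsAllocation A ∧ IsPMMS α c A ∧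
        ¬ IsMMSFair ((n : ℝ) * α / (α + ((n : ℝ) - 1) * (2 - α)) - ε) c A) := by
  exact ⟨part1_aux, part2_aux⟩
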